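/- Degeneracy operators on lattice paths strictly increase the number of internal points: if p is a lattice path, then σ^r_i(p) has exactly one more internal point than p. Consequently, a lattice path lies in the image of some degeneracy operator if and only if it has at least one internal point. -/

import Mathlib

/-- `p` is a lattice path with `N` steps (`N+1` points) in `ℤ^n`. -/
def IsLatticePath (n N : ℕ) (p : Fin (N + 1) → Fin n → ℤ) (tgt : Fin n → ℤ) : Prop :=
  (∀ j, p 0 j = 0) ∧ (∀ j, p (Fin.last N) j = tgt j) ∧
  ∀ a : Fin N, ∃ j : Fin n, p a.succ j = p a.castSucc j + 1 ∧
    ∀ j' : Fin n, j' ≠ j → p a.succ j' = p a.castSucc j'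

/-- The degeneracy map `S^r_i` on points. -/
def Smap (n : ℕ) (r : Fin n) (i : ℕ) (x : Fin n → ℤ) : Fin n → ℤ :=
  fun j => if j = r ∧ (i : ℤ) < x r then x j + 1 else x j

/-- Number of internal points of a path: non-extremal points where the
incoming and the outgoing steps have the same direction. -/
def internalCount (n N : ℕ) (p : Fin (N + 1) → Fin n → ℤ) : ℕ :=
  (Finset.univ.filter (fun a : Fin (N + 1) => ∃ d e : Fin N,
      ((d : ℕ) + 1 = (a : ℕ)) ∧ ((e : ℕ) = (a : ℕ)) ∧
      (fun j => p d.succ j - p d.castSucc j) = (fun j => p e.succ j - p e.castSucc j))).card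

section AuxStmt10

variable {n : ℕ}

lemma step_spec {M : ℕ} {p : Fin (M+1) → Fin n → ℤ} {tgt : Fin n → ℤ}
    (hp : IsLatticePath n M p tgt) (a : Fin M) :
    ∃ j : Fin n, ∀ j', p a.succ j' = p a.castSucc j' + (if j' = j then 1 else 0) := by
  obtain ⟨j, h1, h2⟩ := hp.2.2 a
  refine ⟨j, fun j' => ?_⟩
  by_cases h : j' = j
  · subst h; simpa using h1
  · simpa [h] using h2 j' h

lemma step_of_spec {M : ℕ} {p : Fin (M+1) → Fin n → ℤ} (a : Fin M) (j : Fin n)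
    (h : ∀ j', p a.succ j' = p a.castSucc j' + (if j' = j then 1 else 0)) :
    ∃ j : Fin n, p a.succ j = p a.castSucc j + 1 ∧
    ∀ j' : Fin n, j' ≠ j → p a.succ j' = p a.castSucc j' :=
  ⟨j, by simpa using h j, fun j' hj' => by simpa [hj'] using h j'⟩

lemma path_mono {M : ℕ} {p : Fin (M+1) → Fin n → ℤ} {tgt : Fin n → ℤ}
    (hp : IsLatticePath n M p tgt) (j : Fin n) :
    Monotone (fun a : Fin (M+1) => p a j) := by
  rw [Fin.monotone_iff_le_succ]
  intro a
  obtain ⟨j0, hs⟩ := step_spec hp a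
  have := hs j
  rw [this]
  split <;> omega

lemma path_nonneg {M : ℕ} {p : Fin (M+1) → Fin n → ℤ} {tgt : Fin n → ℤ}
    (hp : IsLatticePath n M p tgt) (a : Fin (M+1)) (j : Fin n) :
    0 ≤ p a j := by
  have := path_mono hp j (Fin.zero_le a)
  simpa [hp.1 j] using this

lemma path_sum {M : ℕ} {p : Fin (M+1) → Fin n → ℤ} {tgt : Fin n → ℤ}
    (hp : IsLatticePath n M p tgt) (a : Fin (M+1)) :
    ∑ j, p a j = (a : ℕ) := by
  induction a using Fin.induction with
  | zero => simp [hp.1]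
  | succ a ih =>
    obtain ⟨j0, hs⟩ := step_spec hp a
    rw [Finset.sum_congr rfl (fun j _ => hs j), Finset.sum_add_distrib, ih]
    simp

lemma succAbove_coe {M : ℕ} (c : Fin (M+1)) (b : Fin M) :
    ((c.succAbove b : Fin (M+1)) : ℕ) = if (b:ℕ) < (c:ℕ) then (b:ℕ) else (b:ℕ)+1 := by
  rcases lt_or_ge ((b:ℕ)) ((c:ℕ)) with h | h
  · rw [Fin.succAbove, if_pos (by simpa [Fin.lt_def] using h), if_pos h]; rfl
  · rw [Fin.succAbove, if_neg (by simp only [Fin.lt_def, Fin.coe_castSucc]; omega), if_neg (by omega)]; rfl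

lemma Smap_sum (r : Fin n) (i : ℕ) (x : Fin n → ℤ) :
    ∑ j, Smap n r i x j = (∑ j, x j) + (if (i:ℤ) < x r then 1 else 0) := by
  have h : ∀ j, Smap n r i x j = x j + (if (i:ℤ) < x r then (if j = r then (1:ℤ) else 0) else 0) := by
    intro j; unfold Smap
    by_cases h1 : (i:ℤ) < x r <;> by_cases h2 : j = r <;> simp [h1, h2]
  rw [Finset.sum_congr rfl (fun j _ => h j), Finset.sum_add_distrib]
  by_cases h1 : (i:ℤ) < x r <;> simp [h1]

lemma part1 {N : ℕ} (k : Fin n → ℕ) (r : Fin n) (i : ℕ) (hik : i ≤ k r)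
    (p : Fin (N + 2) → Fin n → ℤ)
    (hp : IsLatticePath n (N + 1) p (fun j => (k j : ℤ) + 1))
    (c : Fin (N + 3)) (q : Fin (N + 3) → Fin n → ℤ)
    (hq : ∀ b : Fin (N + 2), q (c.succAbove b) = Smap n r i (p b))
    (hql : IsLatticePath n (N + 2) q (fun j => (Function.update k r (k r + 1) j : ℤ) + 1)) :
    internalCount n (N + 2) q = internalCount n (N + 1) p + 1 := by
  -- the key dichotomy
  have key : ∀ b : Fin (N + 2), ((b:ℕ) < (c:ℕ)) ↔ p b r ≤ (i:ℤ) := by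
    intro b
    have h1 : ∑ j, q (c.succAbove b) j = ((c.succAbove b : Fin (N+3)) : ℕ) := path_sum hql _
    rw [hq b, Smap_sum, path_sum hp b, succAbove_coe] at h1
    constructor
    · intro hb
      by_contra hc2
      push_neg at hc2
      rw [if_pos hc2, if_pos hb] at h1
      push_cast at h1; omega
    · intro hb
      by_contra hc2
      rw [if_neg (not_lt.mpr hb), if_neg hc2] at h1
      push_cast at h1; omega
  have hc1 : 0 < (c:ℕ) := by
    have h0 : p 0 r ≤ (i:ℤ) := by rw [hp.1 r]; exact_mod_cast Int.ofNat_nonneg i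
    have := (key 0).mpr h0
    simpa using this
  have hc2 : (c:ℕ) ≤ N + 1 := by
    have hlast : ¬ p (Fin.last (N+1)) r ≤ (i:ℤ) := by
      rw [hp.2.1 r]; push_cast; omega
    have h2 : ¬ ((Fin.last (N+1) : Fin (N+2)) : ℕ) < (c:ℕ) := fun h => hlast ((key _).mp h)
    simp only [Fin.val_last] at h2
    omega
  have hqlow : ∀ b : Fin (N+2), (b:ℕ) < (c:ℕ) → ∀ j, q b.castSucc j = p b j := by
    intro b hb j
    have h1 : c.succAbove b = b.castSucc := by
      apply Fin.ext; rw [succAbove_coe, if_pos hb]; rfl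
    have h2 := hq b
    rw [h1] at h2
    rw [h2]
    unfold Smap
    rw [if_neg]
    rintro ⟨-, hlt⟩
    exact absurd ((key b).mp hb) (not_le.mpr hlt)
  have hqhigh : ∀ b : Fin (N+2), (c:ℕ) ≤ (b:ℕ) → ∀ j,
      q b.succ j = p b j + (if j = r then 1 else 0) := by
    intro b hb j
    have h1 : c.succAbove b = b.succ := by
      apply Fin.ext; rw [succAbove_coe, if_neg (by omega)]; rfl
    have hlt : (i:ℤ) < p b r := by
      by_contra hle
      push_neg at hle
      have := (key b).mpr hle
      omega
    have h2 := hq b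
    rw [h1] at h2
    rw [h2]
    by_cases hj : j = r
    · subst hj; simp [Smap, hlt]
    · simp [Smap, hj]
  -- the special step index t₀ (step of p crossing level i in coordinate r)
  obtain ⟨t₀, ht₀⟩ : ∃ t : Fin (N+1), (t:ℕ) = (c:ℕ) - 1 := ⟨⟨(c:ℕ)-1, by omega⟩, rfl⟩
  have htc : (t₀.castSucc : ℕ) = (c:ℕ) - 1 := by simpa using ht₀
  have hts : ((t₀.succ : Fin (N+2)) : ℕ) = (c:ℕ) := by simp [Fin.val_succ, ht₀]; omega
  have hlow_cs : p t₀.castSucc r ≤ (i:ℤ) := (key t₀.castSucc).mp (by omega)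
  have hhigh_s : (i:ℤ) < p t₀.succ r := by
    by_contra hle
    push_neg at hle
    have := (key t₀.succ).mpr hle
    omega
  obtain ⟨j0, hj0⟩ := step_spec hp t₀
  have hj0r : j0 = r := by
    by_contra hne
    have := hj0 r
    rw [if_neg (fun h => hne h.symm)] at this
    omega
  subst hj0r
  have hpc : ∀ j, p t₀.succ j = p t₀.castSucc j + (if j = j0 then 1 else 0) := hj0
  -- the inserted point
  obtain ⟨j1, hj1⟩ := step_spec hql t₀.castSucc
  obtain ⟨j2, hj2⟩ := step_spec hql t₀.succ
  have e1 : (t₀.castSucc : Fin (N+2)).succ = c := Fin.ext (by simp only [Fin.val_succ, Fin.coe_castSucc]; omega)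
  have e2 : ((t₀.succ : Fin (N+2)).castSucc : Fin (N+3)) = c := Fin.ext (by simp only [Fin.coe_castSucc, Fin.val_succ]; omega)
  have hA : ∀ j, q c j = p t₀.castSucc j + (if j = j1 then 1 else 0) := by
    intro j
    have := hj1 j
    rw [e1] at this
    rw [this, hqlow t₀.castSucc (by omega) j]
  have hB : ∀ j, p t₀.succ j + (if j = j0 then 1 else 0)
      = q c j + (if j = j2 then 1 else 0) := by
    intro j
    have := hj2 j
    rw [e2] at this
    rw [← this, hqhigh t₀.succ (by omega) j]
  have comb : ∀ j, (if j = j0 then (2:ℤ) else 0)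
      = (if j = j1 then 1 else 0) + (if j = j2 then 1 else 0) := by
    intro j
    have h1 := hA j
    have h2 := hB j
    have h3 := hpc j
    by_cases hj : j = j0 <;> simp [hj] at h1 h2 h3 ⊢ <;> split_ifs at * <;> omega
  have hj1r : j1 = j0 := by
    have := comb j1
    simp only [if_pos rfl] at this
    split_ifs at this <;> omega
  have hqc : ∀ j, q c j = p t₀.castSucc j + (if j = j0 then 1 else 0) := by
    intro j; rw [hA j, hj1r]
  -- the step-transfer lemma
  have htrans : ∀ (t : Fin (N+2)) (t' : Fin (N+1)),
      (((t:ℕ) < (c:ℕ) ∧ (t':ℕ) = (t:ℕ)) ∨ ((c:ℕ) ≤ (t:ℕ) ∧ (t':ℕ) + 1 = (t:ℕ))) →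
      ∀ j, q t.succ j - q t.castSucc j = p t'.succ j - p t'.castSucc j := by
    rintro t t' (⟨h1, h2⟩ | ⟨h1, h2⟩) j
    · have hcs : q t.castSucc j = p t'.castSucc j := by
        rw [show (t.castSucc : Fin (N+3)) = ((t'.castSucc : Fin (N+2)).castSucc : Fin (N+3))
          from Fin.ext (by simp [h2])]
        exact hqlow t'.castSucc (by simpa using (by omega : (t':ℕ) < (c:ℕ))) j
      rcases lt_or_eq_of_le (by omega : (t:ℕ)+1 ≤ (c:ℕ)) with hlt | heq
      · have hsu : q t.succ j = p t'.succ j := by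
          rw [show (t.succ : Fin (N+3)) = (((t'.succ : Fin (N+2))).castSucc : Fin (N+3))
            from Fin.ext (by simp [h2])]
          exact hqlow t'.succ (by simp [h2]; omega) j
        rw [hcs, hsu]
      · have ht' : t' = t₀ := Fin.ext (by omega)
        have hsu : q t.succ j = p t₀.castSucc j + (if j = j0 then 1 else 0) := by
          rw [show (t.succ : Fin (N+3)) = c from Fin.ext (by simp; omega)]
          exact hqc j
        rw [hcs, hsu, ht', hpc j]
    · rcases lt_or_eq_of_le h1 with hlt | heq
      · have hcs : q t.castSucc j = p t'.castSucc j + (if j = j0 then 1 else 0) := by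
          rw [show (t.castSucc : Fin (N+3)) = ((t'.castSucc : Fin (N+2)).succ : Fin (N+3))
            from Fin.ext (by simp; omega)]
          exact hqhigh t'.castSucc (by simp; omega) j
        have hsu : q t.succ j = p t'.succ j + (if j = j0 then 1 else 0) := by
          rw [show (t.succ : Fin (N+3)) = ((t'.succ : Fin (N+2)).succ : Fin (N+3))
            from Fin.ext (by simp; omega)]
          exact hqhigh t'.succ (by simp; omega) j
        rw [hcs, hsu]; ring
      · have ht' : t' = t₀ := Fin.ext (by omega)
        have hcs : q t.castSucc j = p t₀.castSucc j + (if j = j0 then 1 else 0) := by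
          rw [show (t.castSucc : Fin (N+3)) = c from Fin.ext (by simp; omega)]
          exact hqc j
        have hsu : q t.succ j = p t₀.succ j + (if j = j0 then 1 else 0) := by
          rw [show (t.succ : Fin (N+3)) = ((t₀.succ : Fin (N+2)).succ : Fin (N+3))
            from Fin.ext (by simp [hts]; omega)]
          exact hqhigh t₀.succ (by omega) j
        rw [hcs, hsu, ht']; ring
  -- the membership characterization
  have memiff : ∀ a' : Fin (N+3),
      (∃ d e : Fin (N+2), ((d:ℕ)+1 = (a':ℕ)) ∧ ((e:ℕ) = (a':ℕ)) ∧
        (fun j => q d.succ j - q d.castSucc j) = (fun j => q e.succ j - q e.castSucc j)) ↔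
      (a' = c ∨ ∃ a : Fin (N+2), (∃ d e : Fin (N+1), ((d:ℕ)+1 = (a:ℕ)) ∧ ((e:ℕ) = (a:ℕ)) ∧
        (fun j => p d.succ j - p d.castSucc j) = (fun j => p e.succ j - p e.castSucc j))
        ∧ c.succAbove a = a') := by
    intro a'
    constructor
    · rintro ⟨d, e, hd, he, hde⟩
      by_cases hac : a' = c
      · exact Or.inl hac
      right
      have ha1 : 1 ≤ (a':ℕ) := by omega
      have ha2 : (a':ℕ) ≤ N+1 := by have := e.isLt; omega
      have hacn : (a':ℕ) ≠ (c:ℕ) := fun h => hac (Fin.ext h)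
      rcases lt_or_gt_of_ne hacn with hlt | hgt
      · obtain ⟨a, hav⟩ : ∃ a : Fin (N+2), (a:ℕ) = (a':ℕ) := ⟨⟨(a':ℕ), by omega⟩, rfl⟩
        obtain ⟨d2, hd2⟩ : ∃ x : Fin (N+1), (x:ℕ) = (a':ℕ)-1 := ⟨⟨(a':ℕ)-1, by omega⟩, rfl⟩
        obtain ⟨e2, he2⟩ : ∃ x : Fin (N+1), (x:ℕ) = (a':ℕ) := ⟨⟨(a':ℕ), by omega⟩, rfl⟩
        refine ⟨a, ⟨d2, e2, by omega, by omega, ?_⟩,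
          Fin.ext (by rw [succAbove_coe, if_pos (by omega)]; omega)⟩
        funext j
        rw [← htrans d d2 (Or.inl ⟨by omega, by omega⟩) j,
            ← htrans e e2 (Or.inl ⟨by omega, by omega⟩) j]
        exact congrFun hde j
      · obtain ⟨a, hav⟩ : ∃ a : Fin (N+2), (a:ℕ) = (a':ℕ)-1 := ⟨⟨(a':ℕ)-1, by omega⟩, rfl⟩
        obtain ⟨d2, hd2⟩ : ∃ x : Fin (N+1), (x:ℕ) = (a':ℕ)-2 := ⟨⟨(a':ℕ)-2, by omega⟩, rfl⟩
        obtain ⟨e2, he2⟩ : ∃ x : Fin (N+1), (x:ℕ) = (a':ℕ)-1 := ⟨⟨(a':ℕ)-1, by omega⟩, rfl⟩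
        refine ⟨a, ⟨d2, e2, by omega, by omega, ?_⟩,
          Fin.ext (by rw [succAbove_coe, if_neg (by omega)]; omega)⟩
        funext j
        rw [← htrans d d2 (Or.inr ⟨by omega, by omega⟩) j,
            ← htrans e e2 (Or.inr ⟨by omega, by omega⟩) j]
        exact congrFun hde j
    · rintro (rfl | ⟨a, ⟨d, e, hd, he, hde⟩, rfl⟩)
      · obtain ⟨d', hd'⟩ : ∃ x : Fin (N+2), (x:ℕ) = (a':ℕ)-1 := ⟨⟨(a':ℕ)-1, by omega⟩, rfl⟩
        obtain ⟨e', he'⟩ : ∃ x : Fin (N+2), (x:ℕ) = (a':ℕ) := ⟨⟨(a':ℕ), by omega⟩, rfl⟩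
        refine ⟨d', e', by omega, by omega, ?_⟩
        funext j
        rw [htrans d' t₀ (Or.inl ⟨by omega, by omega⟩) j,
            htrans e' t₀ (Or.inr ⟨by omega, by omega⟩) j]
      · have ha1 : 1 ≤ (a:ℕ) := by omega
        have ha2 : (a:ℕ) ≤ N := by have := e.isLt; omega
        have hval : ((c.succAbove a : Fin (N+3)):ℕ)
            = if (a:ℕ) < (c:ℕ) then (a:ℕ) else (a:ℕ)+1 := succAbove_coe c a
        by_cases hac : (a:ℕ) < (c:ℕ)
        · obtain ⟨d', hd'⟩ : ∃ x : Fin (N+2), (x:ℕ) = (a:ℕ)-1 := ⟨⟨(a:ℕ)-1, by omega⟩, rfl⟩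
          obtain ⟨e', he'⟩ : ∃ x : Fin (N+2), (x:ℕ) = (a:ℕ) := ⟨⟨(a:ℕ), by omega⟩, rfl⟩
          refine ⟨d', e', by rw [hval, if_pos hac]; omega, by rw [hval, if_pos hac]; omega, ?_⟩
          funext j
          rw [htrans d' d (Or.inl ⟨by omega, by omega⟩) j,
              htrans e' e (Or.inl ⟨by omega, by omega⟩) j]
          exact congrFun hde j
        · obtain ⟨d', hd'⟩ : ∃ x : Fin (N+2), (x:ℕ) = (a:ℕ) := ⟨⟨(a:ℕ), by omega⟩, rfl⟩
          obtain ⟨e', he'⟩ : ∃ x : Fin (N+2), (x:ℕ) = (a:ℕ)+1 := ⟨⟨(a:ℕ)+1, by omega⟩, rfl⟩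
          refine ⟨d', e', by rw [hval, if_neg hac]; omega, by rw [hval, if_neg hac]; omega, ?_⟩
          funext j
          rw [htrans d' d (Or.inr ⟨by omega, by omega⟩) j,
              htrans e' e (Or.inr ⟨by omega, by omega⟩) j]
          exact congrFun hde j
  -- counting
  unfold internalCount
  have hset : (Finset.univ.filter (fun a : Fin (N + 3) => ∃ d e : Fin (N+2),
      ((d : ℕ) + 1 = (a : ℕ)) ∧ ((e : ℕ) = (a : ℕ)) ∧
      (fun j => q d.succ j - q d.castSucc j) = (fun j => q e.succ j - q e.castSucc j)))
      = insert c ((Finset.univ.filter (fun a : Fin (N + 2) => ∃ d e : Fin (N+1),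
      ((d : ℕ) + 1 = (a : ℕ)) ∧ ((e : ℕ) = (a : ℕ)) ∧
      (fun j => p d.succ j - p d.castSucc j) = (fun j => p e.succ j - p e.castSucc j))).image
        c.succAbove) := by
    ext a'
    simp only [Finset.mem_filter, Finset.mem_univ, true_and, Finset.mem_insert,
      Finset.mem_image]
    rw [memiff a']
  rw [hset, Finset.card_insert_of_notMem, Finset.card_image_of_injective _
    (Fin.succAbove_right_injective (p := c))]
  simp only [Finset.mem_image]
  rintro ⟨a, -, h⟩
  exact Fin.succAbove_ne c a h
lemma part2fwd {N : ℕ} (k : Fin n → ℕ) (q : Fin (N + 3) → Fin n → ℤ)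
    (hql : IsLatticePath n (N + 2) q (fun j => (k j : ℤ) + 1))
    (h1 : 1 ≤ internalCount n (N + 2) q) :
    ∃ (r : Fin n) (i : ℕ) (k' : Fin n → ℕ) (p : Fin (N + 2) → Fin n → ℤ)
      (c : Fin (N + 3)),
      i ≤ k' r ∧ k = Function.update k' r (k' r + 1) ∧
      IsLatticePath n (N + 1) p (fun j => (k' j : ℤ) + 1) ∧
      ∀ b : Fin (N + 2), q (c.succAbove b) = Smap n r i (p b) := by
  unfold internalCount at h1
  obtain ⟨a', ha'⟩ := Finset.card_pos.mp h1
  rw [Finset.mem_filter] at ha'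
  obtain ⟨-, d', e', hd', he', hde⟩ := ha'
  obtain ⟨j1, hs1⟩ := step_spec hql d'
  obtain ⟨j2, hs2⟩ := step_spec hql e'
  have hj12 : j1 = j2 := by
    by_cases hne : j1 = j2
    · exact hne
    · have h := congrFun hde j1
      rw [hs1 j1, hs2 j1, if_pos rfl, if_neg hne] at h
      omega
  subst hj12
  have ha1 : 1 ≤ (a':ℕ) := by omega
  have ha2 : (a':ℕ) ≤ N+1 := by have := e'.isLt; omega
  have hnn : 0 ≤ q d'.castSucc j1 := path_nonneg hql _ _
  set i : ℕ := (q d'.castSucc j1).toNat with hidef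
  have hi : (i:ℤ) = q d'.castSucc j1 := Int.toNat_of_nonneg hnn
  have ecs : (e'.castSucc : Fin (N+3)) = d'.succ :=
    Fin.ext (by simp only [Fin.coe_castSucc, Fin.val_succ]; omega)
  have hstep2 : ∀ j, q e'.succ j = q d'.castSucc j + 2 * (if j = j1 then 1 else 0) := by
    intro j
    rw [hs2 j, ecs, hs1 j]
    ring
  have hmono := path_mono hql
  have hkr' : i + 1 ≤ k j1 := by
    have h2 : q e'.succ j1 ≤ q (Fin.last (N+2)) j1 := hmono j1 (Fin.le_last _)
    have h3 : q (Fin.last (N+2)) j1 = (k j1 : ℤ) + 1 := hql.2.1 j1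
    rw [h3, hstep2 j1, if_pos rfl, ← hi] at h2
    omega
  refine ⟨j1, i, Function.update k j1 (k j1 - 1),
    (fun b j => if (b:ℕ) < (a':ℕ) then q b.castSucc j else q b.succ j - (if j = j1 then 1 else 0)),
    a', ?_, ?_, ⟨?_, ?_, ?_⟩, ?_⟩
  · rw [Function.update_self]; omega
  · funext j
    by_cases hj : j = j1
    · subst hj; simp [Function.update_self]; omega
    · simp [Function.update_of_ne hj]
  · -- starts at 0
    intro j
    simp only
    rw [if_pos (lt_of_lt_of_le (by simp) ha1 : ((0 : Fin (N+2)):ℕ) < (a':ℕ))]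
    rw [show ((0 : Fin (N+2)).castSucc : Fin (N+3)) = 0 from Fin.ext (by simp)]
    exact hql.1 j
  · -- ends at target
    intro j
    simp only
    rw [if_neg (by simp only [Fin.val_last]; omega)]
    rw [show ((Fin.last (N+1)).succ : Fin (N+3)) = Fin.last (N+2) from Fin.ext (by simp)]
    rw [hql.2.1 j]
    by_cases hj : j = j1
    · subst hj
      rw [if_pos rfl, Function.update_self]
      rw [Nat.cast_sub (by omega)]
      push_cast
      ring
    · rw [if_neg hj, Function.update_of_ne hj]
      ring
  · -- steps
    intro a
    rcases lt_trichotomy ((a:ℕ)+1) ((a':ℕ)) with hlt | heq | hgt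
    · obtain ⟨u, hu⟩ : ∃ u : Fin (N+2), (u:ℕ) = (a:ℕ) := ⟨⟨(a:ℕ), by omega⟩, rfl⟩
      obtain ⟨ju, hju⟩ := step_spec hql u
      apply step_of_spec (p := fun b j => if (b:ℕ) < (a':ℕ) then q b.castSucc j else q b.succ j - (if j = j1 then 1 else 0)) a ju
      intro j'
      have c1 : ((a.succ : Fin (N+2)) : ℕ) < (a':ℕ) := by
        simp only [Fin.val_succ]; omega
      have c2 : ((a.castSucc : Fin (N+2)) : ℕ) < (a':ℕ) := by
        simp only [Fin.coe_castSucc]; omega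
      simp only [if_pos c1, if_pos c2]
      rw [show ((a.succ : Fin (N+2)).castSucc : Fin (N+3)) = u.succ from
          Fin.ext (by simp only [Fin.coe_castSucc, Fin.val_succ, hu]),
        show ((a.castSucc : Fin (N+2)).castSucc : Fin (N+3)) = u.castSucc from
          Fin.ext (by simp only [Fin.coe_castSucc, hu])]
      exact hju j'
    · apply step_of_spec (p := fun b j => if (b:ℕ) < (a':ℕ) then q b.castSucc j else q b.succ j - (if j = j1 then 1 else 0)) a j1
      intro j'
      have c1 : ¬ ((a.succ : Fin (N+2)) : ℕ) < (a':ℕ) := by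
        simp only [Fin.val_succ]; omega
      have c2 : ((a.castSucc : Fin (N+2)) : ℕ) < (a':ℕ) := by
        simp only [Fin.coe_castSucc]; omega
      simp only [if_neg c1, if_pos c2]
      rw [show ((a.succ : Fin (N+2)).succ : Fin (N+3)) = e'.succ from
          Fin.ext (by simp only [Fin.val_succ]; omega),
        show ((a.castSucc : Fin (N+2)).castSucc : Fin (N+3)) = d'.castSucc from
          Fin.ext (by simp only [Fin.coe_castSucc]; omega)]
      rw [hstep2 j']
      by_cases hj : j' = j1 <;> simp [hj] <;> ring
    · obtain ⟨u, hu⟩ : ∃ u : Fin (N+2), (u:ℕ) = (a:ℕ)+1 := ⟨⟨(a:ℕ)+1, by omega⟩, rfl⟩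
      obtain ⟨ju, hju⟩ := step_spec hql u
      apply step_of_spec (p := fun b j => if (b:ℕ) < (a':ℕ) then q b.castSucc j else q b.succ j - (if j = j1 then 1 else 0)) a ju
      intro j'
      have c1 : ¬ ((a.succ : Fin (N+2)) : ℕ) < (a':ℕ) := by
        simp only [Fin.val_succ]; omega
      have c2 : ¬ ((a.castSucc : Fin (N+2)) : ℕ) < (a':ℕ) := by
        simp only [Fin.coe_castSucc]; omega
      simp only [if_neg c1, if_neg c2]
      rw [show ((a.succ : Fin (N+2)).succ : Fin (N+3)) = u.succ from
          Fin.ext (by simp only [Fin.val_succ, hu]),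
        show ((a.castSucc : Fin (N+2)).succ : Fin (N+3)) = u.castSucc from
          Fin.ext (by simp only [Fin.val_succ, Fin.coe_castSucc, hu])]
      rw [hju j']
      ring
  · -- the defining relation
    intro b
    funext j
    by_cases hb : (b:ℕ) < (a':ℕ)
    · have hsA : a'.succAbove b = b.castSucc := Fin.ext (by rw [succAbove_coe, if_pos hb]; rfl)
      have hle : q b.castSucc j1 ≤ (i:ℤ) := by
        rw [hi]
        exact hmono j1 (by simp only [Fin.le_def, Fin.coe_castSucc]; omega)
      rw [hsA]
      unfold Smap
      simp only [if_pos hb]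
      rw [if_neg]
      rintro ⟨-, hlt2⟩
      omega
    · have hsB : a'.succAbove b = b.succ := Fin.ext (by rw [succAbove_coe, if_neg hb]; rfl)
      have hge : (i:ℤ) + 2 ≤ q b.succ j1 := by
        have h2 : q e'.succ j1 ≤ q b.succ j1 :=
          hmono j1 (by simp only [Fin.le_def, Fin.val_succ]; omega)
        rw [hstep2 j1, if_pos rfl, ← hi] at h2
        omega
      rw [hsB]
      unfold Smap
      simp only [if_neg hb]
      by_cases hj : j = j1
      · subst hj
        rw [if_pos ⟨rfl, by omega⟩]
        norm_num
      · rw [if_neg (by tauto), if_neg hj]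
        ring

end AuxStmt10

/-- Degeneracies strictly increase the number of internal points by exactly one,
and a lattice path is in the image of a degeneracy operator if and only if it
has at least one internal point. -/
theorem stmt10 (n : ℕ) :
    (∀ (N : ℕ) (k : Fin n → ℕ) (r : Fin n) (i : ℕ), i ≤ k r →
      ∀ (p : Fin (N + 2) → Fin n → ℤ),
        IsLatticePath n (N + 1) p (fun j => (k j : ℤ) + 1) →
      ∀ (c : Fin (N + 3)) (q : Fin (N + 3) → Fin n → ℤ),
        (∀ b : Fin (N + 2), q (c.succAbove b) = Smap n r i (p b)) →
        IsLatticePath n (N + 2) q (fun j => (Function.update k r (k r + 1) j : ℤ) + 1) →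
        internalCount n (N + 2) q = internalCount n (N + 1) p + 1) ∧
    (∀ (N : ℕ) (k : Fin n → ℕ) (q : Fin (N + 3) → Fin n → ℤ),
      IsLatticePath n (N + 2) q (fun j => (k j : ℤ) + 1) →
      (1 ≤ internalCount n (N + 2) q ↔
        ∃ (r : Fin n) (i : ℕ) (k' : Fin n → ℕ) (p : Fin (N + 2) → Fin n → ℤ)
          (c : Fin (N + 3)),
          i ≤ k' r ∧ k = Function.update k' r (k' r + 1) ∧
          IsLatticePath n (N + 1) p (fun j => (k' j : ℤ) + 1) ∧
          ∀ b : Fin (N + 2), q (c.succAbove b) = Smap n r i (p b))) := by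
  constructor
  · intro N k r i hik p hp c q hq hql
    exact part1 k r i hik p hp c q hq hql
  · intro N k q hql
    constructor
    · intro h1
      exact part2fwd k q hql h1
    · rintro ⟨r, i, k', p, c, hik, rfl, hp, hq⟩
      have := part1 k' r i hik p hp c q hq hql
      omega
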